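/- Assume q = v² is generic and define S_r = (S^−)^r (S^+)^r / ([r]!)² ∈ End(V) for r ≥ 0. Let k, l be integers with 0 ≤ k ≤ l and let m ≥ 0 be a half-integer (2m ∈ ℤ). Then for every u in the weight space W_m one has S_k S_l u = Σ_{i=0}^{k} [l+i choose k] [l+i choose l] [2m+k+l choose k−i] S_{l+i} u. -/

import Mathlib

open Matrix Filter Topology BigOperators Finset

noncomputable section

/-- Spin configurations: basis labels of `(ℂ²)^{⊗n}`; `0` is `+`, `1` is `−`. -/
abbrev Spins (n : ℕ) := Fin n → Fin 2

/-- σ⁺ = [[0,1],[0,0]] -/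
def sigmaP : Matrix (Fin 2) (Fin 2) ℂ := fun a b => if a = 0 ∧ b = 1 then 1 else 0

/-- σ⁻ = [[0,0],[1,0]] -/
def sigmaM : Matrix (Fin 2) (Fin 2) ℂ := fun a b => if a = 1 ∧ b = 0 then 1 else 0

/-- diagonal entry of K = diag(v, v⁻¹) -/
def Kdiag (v : ℂ) (a : Fin 2) : ℂ := if a = 0 then v else v⁻¹

/-- `S_i^A = K^{⊗(i−1)} ⊗ A ⊗ (K⁻¹)^{⊗(n−i)}` as a matrix on `(ℂ²)^{⊗n}`. -/
def siteOp (n : ℕ) (v : ℂ) (A : Matrix (Fin 2) (Fin 2) ℂ) (i : Fin n) :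
    Matrix (Spins n) (Spins n) ℂ :=
  fun x y => ∏ k : Fin n,
    if k < i then (if x k = y k then Kdiag v (x k) else 0)
    else if k = i then A (x k) (y k)
    else (if x k = y k then Kdiag v⁻¹ (x k) else 0)

/-- `S^+ = Σ_i S_i^+`. -/
def SpOp (n : ℕ) (v : ℂ) : Matrix (Spins n) (Spins n) ℂ := ∑ i : Fin n, siteOp n v sigmaP i

/-- `S^- = Σ_i S_i^-`. -/
def SmOp (n : ℕ) (v : ℂ) : Matrix (Spins n) (Spins n) ℂ := ∑ i : Fin n, siteOp n v sigmaM i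

/-- `Σ^z = Σ_i 1 ⊗ ⋯ ⊗ σ^z ⊗ ⋯ ⊗ 1` (diagonal). -/
def SzOp (n : ℕ) : Matrix (Spins n) (Spins n) ℂ :=
  fun x y => if x = y then ∑ k : Fin n, (if x k = 0 then (1 : ℂ) else -1) else 0

/-- symmetric q-number `[k] = (q^k − q^{−k})/(q − q⁻¹)`. -/
def qNum (q : ℂ) (k : ℤ) : ℂ := (q ^ k - q ^ (-k)) / (q - q⁻¹)

/-- q-factorial `[k]! = [k][k−1]⋯[1]`, `[0]! = 1`. -/
def qFact (q : ℂ) : ℕ → ℂ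
  | 0 => 1
  | k + 1 => qNum q (k + 1) * qFact q k

/-- q-binomial `[k choose l]`, zero unless `0 ≤ l ≤ k`. -/
def qBinom (q : ℂ) (k l : ℤ) : ℂ :=
  if 0 ≤ l ∧ l ≤ k then qFact q k.toNat / (qFact q l.toNat * qFact q (k - l).toNat) else 0

/-- `q` is generic: nonzero and not a root of unity. -/
def Generic (q : ℂ) : Prop := q ≠ 0 ∧ ∀ k : ℕ, 0 < k → q ^ k ≠ 1

def GenericSet : Set ℂ := {q | Generic q}

/-- the root of unity `q` is associated with `p`: `p ≥ 2` is minimal with `q^{2p} = 1`. -/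
def AssocRootOfUnity (q : ℂ) (p : ℕ) : Prop :=
  2 ≤ p ∧ q ^ (2 * p) = 1 ∧ ∀ k : ℕ, 0 < k → k < p → q ^ (2 * k) ≠ 1

/-- the coefficient `a_{i,j,m}` of the paper, with `k = j − m` and `s = j + m`:
`a = (−1)^{i+k} [i choose k] [i+s+1 choose i+1]⁻¹ [k+s+1] / [i+1]`. -/
def aCoeff (q : ℂ) (i k s : ℤ) : ℂ :=
  (-1 : ℂ) ^ (i + k) * qBinom q i k * (qBinom q (i + s + 1) (i + 1))⁻¹ *
    qNum q (k + s + 1) / qNum q (i + 1)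

/-- `S_r = (S^−)^r (S^+)^r / ([r]!)²` with `q = v²`. -/
def SOp (n : ℕ) (v : ℂ) (r : ℕ) : Matrix (Spins n) (Spins n) ℂ :=
  ((qFact (v ^ 2) r) ^ 2)⁻¹ • (SmOp n v ^ r * SpOp n v ^ r)

/-- a function of `q` is regular at `q_c` if it has a finite limit as `q → q_c`
through generic values of `q`. -/
def RegularAt (f : ℂ → ℂ) (qc : ℂ) : Prop :=
  ∃ L : ℂ, Tendsto f (𝓝[GenericSet] qc) (𝓝 L)


/-! tensor operator framework -/
def tOp (n : ℕ) (A : Fin n → Matrix (Fin 2) (Fin 2) ℂ) : Matrix (Spins n) (Spins n) ℂ :=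
  fun x y => ∏ k : Fin n, A k (x k) (y k)

lemma tOp_mul (n : ℕ) (A B : Fin n → Matrix (Fin 2) (Fin 2) ℂ) :
    tOp n A * tOp n B = tOp n (fun k => A k * B k) := by
  ext x y
  simp only [tOp, Matrix.mul_apply]
  rw [Fintype.prod_sum]
  exact Finset.sum_congr rfl fun z _ => (Finset.prod_mul_distrib).symm

lemma siteOp_eq_tOp (n : ℕ) (v : ℂ) (A : Matrix (Fin 2) (Fin 2) ℂ) (i : Fin n) :
    siteOp n v A i = tOp n (fun k =>
      if k < i then Matrix.diagonal (Kdiag v) else if k = i then A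
      else Matrix.diagonal (Kdiag v⁻¹)) := by
  ext x y
  refine Finset.prod_congr rfl fun k _ => ?_
  by_cases h1 : k < i <;> by_cases h2 : k = i <;>
    simp [h1, h2, Matrix.diagonal_apply, eq_comm]

lemma tOp_diagonal (n : ℕ) (d : Fin n → Fin 2 → ℂ) :
    tOp n (fun k => Matrix.diagonal (d k)) =
      Matrix.diagonal (fun x : Spins n => ∏ k, d k (x k)) := by
  ext x y
  by_cases h : x = y
  · subst h; simp [tOp, Matrix.diagonal_apply]
  · obtain ⟨k, hk⟩ := Function.ne_iff.mp h
    rw [Matrix.diagonal_apply_ne _ h]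
    exact Finset.prod_eq_zero (Finset.mem_univ k) (by simp [Matrix.diagonal_apply, hk])

lemma tOp_smul_site (n : ℕ) (A B : Fin n → Matrix (Fin 2) (Fin 2) ℂ) (i : Fin n) (c : ℂ)
    (hi : A i = c • B i) (ho : ∀ k, k ≠ i → A k = B k) :
    tOp n A = c • tOp n B := by
  ext x y
  simp only [tOp, Matrix.smul_apply, smul_eq_mul]
  rw [← Finset.mul_prod_erase Finset.univ _ (Finset.mem_univ i),
      ← Finset.mul_prod_erase Finset.univ (fun k => B k (x k) (y k)) (Finset.mem_univ i),
      hi]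
  rw [Finset.prod_congr rfl (fun k hk => by rw [ho k (Finset.ne_of_mem_erase hk)])]
  simp [mul_assoc]

lemma tOp_eq_two_site (n : ℕ) (A B : Fin n → Matrix (Fin 2) (Fin 2) ℂ) (i j : Fin n)
    (hij : i ≠ j)
    (h2 : ∀ a b a' b', A i a b * A j a' b' = B i a b * B j a' b')
    (ho : ∀ k, k ≠ i → k ≠ j → A k = B k) :
    tOp n A = tOp n B := by
  ext x y
  simp only [tOp]
  rw [← Finset.mul_prod_erase Finset.univ _ (Finset.mem_univ i),
      ← Finset.mul_prod_erase Finset.univ (fun k => B k (x k) (y k)) (Finset.mem_univ i),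
      ← Finset.mul_prod_erase _ _ (Finset.mem_erase.mpr ⟨hij.symm, Finset.mem_univ j⟩),
      ← Finset.mul_prod_erase _ (fun k => B k (x k) (y k))
        (Finset.mem_erase.mpr ⟨hij.symm, Finset.mem_univ j⟩)]
  rw [Finset.prod_congr rfl (fun k hk => by
    have h1 := Finset.ne_of_mem_erase hk
    have h2' := Finset.ne_of_mem_erase (Finset.mem_of_mem_erase hk)
    rw [ho k h2' h1])]
  rw [← mul_assoc, ← mul_assoc, h2]

lemma tOp_sub_site (n : ℕ) (A B C : Fin n → Matrix (Fin 2) (Fin 2) ℂ) (i : Fin n)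
    (hi : C i = A i - B i) (ho : ∀ k, k ≠ i → A k = C k ∧ B k = C k) :
    tOp n A - tOp n B = tOp n C := by
  ext x y
  simp only [tOp, Matrix.sub_apply]
  rw [← Finset.mul_prod_erase Finset.univ _ (Finset.mem_univ i),
      ← Finset.mul_prod_erase Finset.univ (fun k => B k (x k) (y k)) (Finset.mem_univ i),
      ← Finset.mul_prod_erase Finset.univ (fun k => C k (x k) (y k)) (Finset.mem_univ i)]
  rw [Finset.prod_congr rfl (fun k hk => by rw [(ho k (Finset.ne_of_mem_erase hk)).1]),
      Finset.prod_congr rfl (fun k hk => show B k (x k) (y k) = C k (x k) (y k) by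
        rw [(ho k (Finset.ne_of_mem_erase hk)).2]),
      hi]
  simp [Matrix.sub_apply, sub_mul]

/-! 2×2 site lemmas -/
def qe (q : ℂ) (a : Fin 2) : ℂ := if a = 0 then q else q⁻¹
def szd (a : Fin 2) : ℂ := if a = 0 then 1 else -1

lemma diag_mul_sigmaP (d : Fin 2 → ℂ) : Matrix.diagonal d * sigmaP = d 0 • sigmaP := by
  ext a b
  fin_cases a <;> fin_cases b <;>
    simp [Matrix.mul_apply, Fin.sum_univ_two, sigmaP, Matrix.diagonal_apply]

lemma sigmaP_mul_diag (d : Fin 2 → ℂ) : sigmaP * Matrix.diagonal d = d 1 • sigmaP := by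
  ext a b
  fin_cases a <;> fin_cases b <;>
    simp [Matrix.mul_apply, Fin.sum_univ_two, sigmaP, Matrix.diagonal_apply]

lemma diag_mul_sigmaM (d : Fin 2 → ℂ) : Matrix.diagonal d * sigmaM = d 1 • sigmaM := by
  ext a b
  fin_cases a <;> fin_cases b <;>
    simp [Matrix.mul_apply, Fin.sum_univ_two, sigmaM, Matrix.diagonal_apply]

lemma sigmaM_mul_diag (d : Fin 2 → ℂ) : sigmaM * Matrix.diagonal d = d 0 • sigmaM := by
  ext a b
  fin_cases a <;> fin_cases b <;>
    simp [Matrix.mul_apply, Fin.sum_univ_two, sigmaM, Matrix.diagonal_apply]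

lemma PM_sub_MP : sigmaP * sigmaM - sigmaM * sigmaP = Matrix.diagonal szd := by
  ext a b
  fin_cases a <;> fin_cases b <;>
    simp [Matrix.mul_apply, Fin.sum_univ_two, sigmaP, sigmaM, szd, Matrix.diagonal_apply]

lemma diag_comm (d e : Fin 2 → ℂ) :
    Matrix.diagonal d * Matrix.diagonal e = Matrix.diagonal e * Matrix.diagonal d := by
  rw [Matrix.diagonal_mul_diagonal, Matrix.diagonal_mul_diagonal]
  exact congrArg _ (funext fun a => mul_comm (d a) (e a))

/-! the weight diagonal matrix -/
def Dm (n : ℕ) (q : ℂ) : Matrix (Spins n) (Spins n) ℂ :=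
  Matrix.diagonal (fun x : Spins n => ∏ k, qe q (x k))

lemma Dm_eq_tOp (n : ℕ) (q : ℂ) :
    Dm n q = tOp n (fun _ => Matrix.diagonal (qe q)) := (tOp_diagonal n fun _ => qe q).symm

/-- the site family of `siteOp` -/
def sFam (n : ℕ) (v : ℂ) (A : Matrix (Fin 2) (Fin 2) ℂ) (i : Fin n) (k : Fin n) :
    Matrix (Fin 2) (Fin 2) ℂ :=
  if k < i then Matrix.diagonal (Kdiag v) else if k = i then A
  else Matrix.diagonal (Kdiag v⁻¹)

lemma sFam_diag (n : ℕ) (v : ℂ) (A : Matrix (Fin 2) (Fin 2) ℂ) (i k : Fin n) (h : k ≠ i) :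
    ∃ d, sFam n v A i k = Matrix.diagonal d := by
  unfold sFam
  by_cases h1 : k < i
  · exact ⟨_, by rw [if_pos h1]⟩
  · exact ⟨_, by rw [if_neg h1, if_neg h]⟩

lemma sFam_self (n : ℕ) (v : ℂ) (A : Matrix (Fin 2) (Fin 2) ℂ) (i : Fin n) :
    sFam n v A i i = A := by simp [sFam]

lemma Dm_mul_siteOp (n : ℕ) (v q : ℂ) (A : Matrix (Fin 2) (Fin 2) ℂ) (c : ℂ)
    (h : Matrix.diagonal (qe q) * A = c • (A * Matrix.diagonal (qe q))) (i : Fin n) :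
    Dm n q * siteOp n v A i = c • (siteOp n v A i * Dm n q) := by
  rw [Dm_eq_tOp, siteOp_eq_tOp]
  show tOp n _ * tOp n (sFam n v A i) = c • (tOp n (sFam n v A i) * tOp n _)
  rw [tOp_mul, tOp_mul]
  refine tOp_smul_site n _ _ i c ?_ ?_
  · simp only [sFam_self]; exact h
  · intro k hk
    obtain ⟨d, hd⟩ := sFam_diag n v A i k hk
    simp only [hd]; exact diag_comm _ _

lemma Dm_mul_SpOp (n : ℕ) (v q : ℂ) (hq : q ≠ 0) :
    Dm n q * SpOp n v = (q * q) • (SpOp n v * Dm n q) := by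
  unfold SpOp
  rw [Finset.mul_sum, Finset.sum_mul, Finset.smul_sum]
  refine Finset.sum_congr rfl fun i _ => ?_
  refine Dm_mul_siteOp n v q sigmaP (q * q) ?_ i
  rw [diag_mul_sigmaP, sigmaP_mul_diag]
  simp only [qe, if_pos rfl, smul_smul]
  congr 1
  field_simp
  rw [if_pos trivial, if_neg (by decide), one_div, pow_two, mul_assoc, mul_inv_cancel₀ hq, mul_one]

lemma Dm_mul_SmOp (n : ℕ) (v q : ℂ) (hq : q ≠ 0) :
    Dm n q * SmOp n v = (q * q)⁻¹ • (SmOp n v * Dm n q) := by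
  unfold SmOp
  rw [Finset.mul_sum, Finset.sum_mul, Finset.smul_sum]
  refine Finset.sum_congr rfl fun i _ => ?_
  refine Dm_mul_siteOp n v q sigmaM ((q * q)⁻¹) ?_ i
  rw [diag_mul_sigmaM, sigmaM_mul_diag]
  simp only [qe, if_pos rfl, smul_smul]
  congr 1
  field_simp
  rw [if_pos trivial, if_neg (by decide), one_div, pow_two, mul_assoc, mul_inv_cancel₀ hq, mul_one]
/-! commutator of SpOp and SmOp -/

lemma sFam_lt {n : ℕ} (v : ℂ) (A : Matrix (Fin 2) (Fin 2) ℂ) {i k : Fin n} (h : k < i) :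
    sFam n v A i k = Matrix.diagonal (Kdiag v) := by simp [sFam, h]

lemma sFam_gt {n : ℕ} (v : ℂ) (A : Matrix (Fin 2) (Fin 2) ℂ) {i k : Fin n} (h1 : ¬ k < i)
    (h2 : k ≠ i) : sFam n v A i k = Matrix.diagonal (Kdiag v⁻¹) := by simp [sFam, h1, h2]

lemma sitePM_comm (n : ℕ) (v : ℂ) (hv : v ≠ 0) (i j : Fin n) (hij : i ≠ j) :
    siteOp n v sigmaP i * siteOp n v sigmaM j = siteOp n v sigmaM j * siteOp n v sigmaP i := by
  rw [siteOp_eq_tOp, siteOp_eq_tOp]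
  show tOp n (sFam n v sigmaP i) * tOp n (sFam n v sigmaM j)
      = tOp n (sFam n v sigmaM j) * tOp n (sFam n v sigmaP i)
  rw [tOp_mul, tOp_mul]
  refine tOp_eq_two_site n _ _ i j hij ?_ ?_
  · intro a b a' b'
    simp only [sFam_self]
    rcases lt_or_gt_of_ne hij with hlt | hgt
    · rw [sFam_lt v sigmaM hlt, sFam_gt v sigmaP (asymm hlt) (Ne.symm hij),
          sigmaP_mul_diag, diag_mul_sigmaP, diag_mul_sigmaM, sigmaM_mul_diag]
      simp only [Matrix.smul_apply, smul_eq_mul, Kdiag, inv_inv]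
      norm_num
      field_simp
    · rw [sFam_gt v sigmaM (asymm hgt) hij, sFam_lt v sigmaP hgt,
          sigmaP_mul_diag, diag_mul_sigmaP, diag_mul_sigmaM, sigmaM_mul_diag]
      simp only [Matrix.smul_apply, smul_eq_mul, Kdiag, inv_inv]
      norm_num
      field_simp
  · intro k hki hkj
    obtain ⟨d1, hd1⟩ := sFam_diag n v sigmaP i k hki
    obtain ⟨d2, hd2⟩ := sFam_diag n v sigmaM j k hkj
    simp only [hd1, hd2]
    exact diag_comm _ _

/-- the diagonal family appearing in the commutator -/
def wfam (n : ℕ) (v : ℂ) (i k : Fin n) : Fin 2 → ℂ :=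
  if k < i then fun a => Kdiag v a * Kdiag v a
  else if k = i then szd
  else fun a => Kdiag v⁻¹ a * Kdiag v⁻¹ a

lemma sitePM_diag (n : ℕ) (v : ℂ) (i : Fin n) :
    siteOp n v sigmaP i * siteOp n v sigmaM i - siteOp n v sigmaM i * siteOp n v sigmaP i
      = tOp n (fun k => Matrix.diagonal (wfam n v i k)) := by
  rw [siteOp_eq_tOp, siteOp_eq_tOp]
  show tOp n (sFam n v sigmaP i) * tOp n (sFam n v sigmaM i)
      - tOp n (sFam n v sigmaM i) * tOp n (sFam n v sigmaP i) = _
  rw [tOp_mul, tOp_mul]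
  refine tOp_sub_site n _ _ _ i ?_ ?_
  · simp only [sFam_self, wfam, lt_irrefl, if_neg (lt_irrefl i), if_pos rfl]
    exact PM_sub_MP.symm
  · intro k hk
    constructor <;> {
      by_cases h1 : k < i
      · rw [sFam_lt v _ h1, sFam_lt v _ h1]
        simp only [wfam, if_pos h1]
        rw [Matrix.diagonal_mul_diagonal]
      · rw [sFam_gt v _ h1 hk, sFam_gt v _ h1 hk]
        simp only [wfam, if_neg h1, if_neg hk]
        rw [Matrix.diagonal_mul_diagonal] }

lemma qe_sub (q : ℂ) (a : Fin 2) : qe q a - qe q⁻¹ a = (q - q⁻¹) * szd a := by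
  fin_cases a <;> simp [qe, szd] <;> ring

lemma Kdiag_sq (v : ℂ) (a : Fin 2) : Kdiag v a * Kdiag v a = qe (v^2) a := by
  fin_cases a
  · simp [Kdiag, qe]
    ring
  · simp [Kdiag, qe]
    rw [pow_two, mul_inv]

lemma Kdiag_inv_sq (v : ℂ) (a : Fin 2) : Kdiag v⁻¹ a * Kdiag v⁻¹ a = qe (v^2)⁻¹ a := by
  fin_cases a
  · simp [Kdiag, qe]
    rw [pow_two, mul_inv]
  · simp [Kdiag, qe, inv_inv]
    rw [pow_two]

def hfun (n : ℕ) (q : ℂ) (x : Spins n) (j : ℕ) : ℂ :=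
  ∏ k : Fin n, if (k:ℕ) < j then qe q (x k) else qe q⁻¹ (x k)

lemma telescope (n : ℕ) (v : ℂ) (x : Spins n) :
    (v^2 - (v^2)⁻¹) * ∑ i : Fin n, ∏ k, wfam n v i k (x k)
      = ∏ k, qe (v^2) (x k) - ∏ k, qe (v^2)⁻¹ (x k) := by
  set q := v^2 with hq
  have step : ∀ i : Fin n,
      (q - q⁻¹) * ∏ k, wfam n v i k (x k) = hfun n q x ((i:ℕ)+1) - hfun n q x (i:ℕ) := by
    intro i
    set R : ℂ := ∏ k ∈ Finset.univ.erase i,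
      (if (k:ℕ) < (i:ℕ) then qe q (x k) else qe q⁻¹ (x k)) with hR
    have e3 : ∏ k, wfam n v i k (x k) = szd (x i) * R := by
      rw [← Finset.mul_prod_erase Finset.univ _ (Finset.mem_univ i)]
      congr 1
      · simp [wfam, lt_irrefl]
      · refine Finset.prod_congr rfl fun k hk => ?_
        have hki : k ≠ i := Finset.ne_of_mem_erase hk
        by_cases h1 : k < i
        · simp only [wfam, if_pos h1, if_pos (show (k:ℕ) < (i:ℕ) from h1)]
          exact Kdiag_sq v (x k)
        · have h1' : ¬ (k:ℕ) < (i:ℕ) := h1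
          simp only [wfam, if_neg h1, if_neg hki, if_neg h1']
          exact Kdiag_inv_sq v (x k)
    have e1 : hfun n q x ((i:ℕ)+1) = qe q (x i) * R := by
      unfold hfun
      rw [← Finset.mul_prod_erase Finset.univ _ (Finset.mem_univ i)]
      congr 1
      · simp
      · refine Finset.prod_congr rfl fun k hk => ?_
        have hki : (k:ℕ) ≠ (i:ℕ) :=
          fun hc => Finset.ne_of_mem_erase hk (Fin.ext hc)
        have hiff : (k:ℕ) < (i:ℕ)+1 ↔ (k:ℕ) < (i:ℕ) := by omega
        by_cases h1 : (k:ℕ) < (i:ℕ)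
        · rw [if_pos (hiff.mpr h1), if_pos h1]
        · rw [if_neg (fun hc => h1 (hiff.mp hc)), if_neg h1]
    have e2 : hfun n q x (i:ℕ) = qe q⁻¹ (x i) * R := by
      unfold hfun
      rw [← Finset.mul_prod_erase Finset.univ _ (Finset.mem_univ i)]
      congr 1
      simp
    rw [e1, e2, e3, ← sub_mul, qe_sub]
    ring
  rw [Finset.mul_sum]
  rw [Finset.sum_congr rfl fun i _ => step i,
      Fin.sum_univ_eq_sum_range (fun j => hfun n q x (j+1) - hfun n q x j) n,
      Finset.sum_range_sub (hfun n q x)]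
  have hn : hfun n q x n = ∏ k, qe q (x k) :=
    Finset.prod_congr rfl fun k _ => if_pos k.isLt
  have h0 : hfun n q x 0 = ∏ k, qe q⁻¹ (x k) :=
    Finset.prod_congr rfl fun k _ => if_neg (Nat.not_lt_zero _)
  rw [hn, h0]

lemma EF_comm (n : ℕ) (v : ℂ) (hv : v ≠ 0) :
    (v^2 - (v^2)⁻¹) • (SpOp n v * SmOp n v - SmOp n v * SpOp n v)
      = Dm n (v^2) - Dm n (v^2)⁻¹ := by
  have h1 : SpOp n v * SmOp n v
      = ∑ i : Fin n, ∑ j : Fin n, siteOp n v sigmaP i * siteOp n v sigmaM j := by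
    unfold SpOp SmOp; rw [Finset.sum_mul_sum]
  have h2 : SmOp n v * SpOp n v
      = ∑ i : Fin n, ∑ j : Fin n, siteOp n v sigmaM j * siteOp n v sigmaP i := by
    unfold SpOp SmOp; rw [Finset.sum_mul_sum]; exact Finset.sum_comm
  have expand : SpOp n v * SmOp n v - SmOp n v * SpOp n v
      = ∑ i : Fin n, tOp n (fun k => Matrix.diagonal (wfam n v i k)) := by
    rw [h1, h2, ← Finset.sum_sub_distrib]
    refine Finset.sum_congr rfl fun i _ => ?_
    rw [← Finset.sum_sub_distrib]
    rw [Finset.sum_eq_single i]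
    · exact sitePM_diag n v i
    · intro j _ hji
      rw [sitePM_comm n v hv i j (Ne.symm hji), sub_self]
    · intro hi; exact absurd (Finset.mem_univ i) hi
  rw [expand]
  ext x y
  simp only [Matrix.smul_apply, Matrix.sub_apply, Matrix.sum_apply, Dm, tOp_diagonal]
  by_cases hxy : x = y
  · subst hxy
    simp only [Matrix.diagonal_apply_eq, smul_eq_mul]
    exact telescope n v x
  · simp [Matrix.diagonal_apply_ne _ hxy]


section scalars
variable {q : ℂ}

lemma qsub_ne (hgen : Generic q) : q - q⁻¹ ≠ 0 := by
  intro h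
  have hq0 := hgen.1
  apply hgen.2 2 (by norm_num)
  have : q = q⁻¹ := sub_eq_zero.mp h
  calc q^2 = q * q := sq q
  _ = q * q⁻¹ := by rw [← this]
  _ = 1 := mul_inv_cancel₀ hq0

lemma zpow_ne_one (hgen : Generic q) (m : ℤ) (hm : m ≠ 0) : q ^ m ≠ 1 := by
  have hq0 := hgen.1
  rcases lt_or_gt_of_ne hm with h | h
  · intro hc
    have : q ^ (-m) = 1 := by
      rw [_root_.zpow_neg, hc, inv_one]
    have hmn : (-m).toNat > 0 := by omega
    have : q ^ ((-m).toNat) = 1 := by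
      rw [← zpow_natCast, Int.toNat_of_nonneg (by omega)]
      exact this
    exact hgen.2 _ hmn this
  · intro hc
    have hmn : m.toNat > 0 := by omega
    apply hgen.2 _ hmn
    rw [← zpow_natCast, Int.toNat_of_nonneg (by omega)]
    exact hc

lemma qNum_ne (hgen : Generic q) (m : ℤ) (hm : m ≠ 0) : qNum q m ≠ 0 := by
  have hq0 := hgen.1
  unfold qNum
  apply div_ne_zero _ (qsub_ne hgen)
  intro h
  have : q ^ m = q ^ (-m) := sub_eq_zero.mp h
  have h2 : q ^ (2*m) = 1 := by
    have := congrArg (· * q ^ m) this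
    rw [← zpow_add₀ hq0, ← zpow_add₀ hq0] at this
    simpa [two_mul] using this
  exact zpow_ne_one hgen (2*m) (by omega) h2

lemma qFact_ne (hgen : Generic q) (t : ℕ) : qFact q t ≠ 0 := by
  induction t with
  | zero => simp [qFact]
  | succ t ih =>
    simp only [qFact]
    exact mul_ne_zero (qNum_ne hgen _ (by omega)) ih

/-- the core q-number identity `[a][b] = [a−s][b−s] + [s][a+b−s]` -/
lemma qNum_core (hgen : Generic q) (a b s : ℤ) : qNum q a * qNum q b
    = qNum q (a - s) * qNum q (b - s) + qNum q s * qNum q (a + b - s) := by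
  have hq0 := hgen.1
  have hsub := qsub_ne hgen
  unfold qNum
  rw [div_mul_div_comm, div_mul_div_comm, div_mul_div_comm, ← add_div]
  congr 1
  have h1 : q ^ a ≠ 0 := zpow_ne_zero a hq0
  have h2 : q ^ b ≠ 0 := zpow_ne_zero b hq0
  have h3 : q ^ s ≠ 0 := zpow_ne_zero s hq0
  have e : ∀ X Y Z : ℂ, X ≠ 0 → Y ≠ 0 → Z ≠ 0 →
      (X - X⁻¹) * (Y - Y⁻¹)
        = (X * Z⁻¹ - Z * X⁻¹) * (Y * Z⁻¹ - Z * Y⁻¹)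
          + (Z - Z⁻¹) * (X * Y * Z⁻¹ - Z * (X⁻¹ * Y⁻¹)) := by
    intro X Y Z hX hY hZ
    linear_combination (-(X - X⁻¹) * (Y - Y⁻¹)) * (mul_inv_cancel₀ hZ)
  simp only [neg_sub, neg_add, zpow_sub₀ hq0, zpow_add₀ hq0, _root_.zpow_neg]
  linear_combination e (q ^ a) (q ^ b) (q ^ s) h1 h2 h3
end scalars

/-- closed-form coefficients -/
def ccP (q : ℂ) (l : ℕ) (M2 : ℤ) (j t : ℕ) : ℂ :=
  (∏ s ∈ Finset.range t, qNum q ((j:ℤ) - s)) * (∏ s ∈ Finset.range t, qNum q ((l:ℤ) - s)) *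
  (∏ s ∈ Finset.range t, qNum q ((M2 + j + l : ℤ) - s)) / qFact q t

/-- recursive coefficients -/
def cRec (q : ℂ) (l : ℕ) (M2 : ℤ) : ℕ → ℕ → ℂ
  | 0, 0 => 1
  | 0, _+1 => 0
  | j+1, 0 => cRec q l M2 j 0
  | j+1, t+1 => cRec q l M2 j (t+1)
      + cRec q l M2 j t * qNum q ((l:ℤ) - t) * qNum q (M2 + l + 2*j - t + 1)

section rec
variable {q : ℂ} (l : ℕ) (M2 : ℤ)

lemma ccP_rec (hgen : Generic q) (l : ℕ) (M2 : ℤ) (j t : ℕ) :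
    ccP q l M2 (j+1) (t+1) = ccP q l M2 j (t+1)
      + ccP q l M2 j t * qNum q ((l:ℤ) - t) * qNum q (M2 + l + 2*j - t + 1) := by
  have hFt := qFact_ne hgen t
  have hqt1 : qNum q ((t:ℤ)+1) ≠ 0 := qNum_ne hgen _ (by omega)
  have P1 : (∏ s ∈ range (t+1), qNum q (((j+1:ℕ):ℤ) - (s:ℕ)))
      = qNum q ((j:ℤ)+1) * ∏ s ∈ range t, qNum q ((j:ℤ) - s) := by
    rw [Finset.prod_range_succ']
    have hre : ∀ s ∈ range t, qNum q (((j+1:ℕ):ℤ) - ((s+1:ℕ):ℤ)) = qNum q ((j:ℤ) - s) :=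
      fun s _ => by congr 1; push_cast; ring
    rw [Finset.prod_congr rfl hre, mul_comm]
    have h0 : ((j+1:ℕ):ℤ) - ((0:ℕ):ℤ) = (j:ℤ)+1 := by push_cast; ring
    rw [h0]
  have P3 : (∏ s ∈ range (t+1), qNum q ((M2 + ((j+1:ℕ):ℤ) + (l:ℤ)) - (s:ℕ)))
      = qNum q (M2 + (j:ℤ) + l + 1) * ∏ s ∈ range t, qNum q ((M2 + (j:ℤ) + l) - s) := by
    rw [Finset.prod_range_succ']
    have hre : ∀ s ∈ range t, qNum q ((M2 + ((j+1:ℕ):ℤ) + (l:ℤ)) - ((s+1:ℕ):ℤ))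
        = qNum q ((M2 + (j:ℤ) + l) - s) := fun s _ => by congr 1; push_cast; ring
    rw [Finset.prod_congr rfl hre, mul_comm]
    have h0 : M2 + ((j+1:ℕ):ℤ) + (l:ℤ) - ((0:ℕ):ℤ) = M2 + (j:ℤ) + l + 1 := by push_cast; ring
    rw [h0]
  have P2 : ∏ s ∈ range (t+1), qNum q ((l:ℤ) - s)
      = (∏ s ∈ range t, qNum q ((l:ℤ) - s)) * qNum q ((l:ℤ) - t) :=
    Finset.prod_range_succ _ t
  have P1' : ∏ s ∈ range (t+1), qNum q ((j:ℤ) - s)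
      = (∏ s ∈ range t, qNum q ((j:ℤ) - s)) * qNum q ((j:ℤ) - t) :=
    Finset.prod_range_succ _ t
  have P3' : ∏ s ∈ range (t+1), qNum q ((M2 + (j:ℤ) + l) - s)
      = (∏ s ∈ range t, qNum q ((M2 + (j:ℤ) + l) - s)) * qNum q ((M2 + (j:ℤ) + l) - t) :=
    Finset.prod_range_succ _ t
  have key : qNum q ((j:ℤ)+1) * qNum q ((M2:ℤ) + j + l + 1)
      = qNum q ((j:ℤ) - t) * qNum q ((M2 + (j:ℤ) + l) - t)
        + qNum q ((t:ℤ)+1) * qNum q (M2 + (l:ℤ) + 2*j - t + 1) := by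
    have hc := qNum_core hgen ((j:ℤ)+1) ((M2:ℤ) + j + l + 1) ((t:ℤ)+1)
    rw [hc]
    congr 2 <;> push_cast <;> ring
  unfold ccP
  rw [P1, P3, P2, P1', P3']
  have hN : qFact q (t+1) = qNum q ((t:ℤ)+1) * qFact q t := by
    show qNum q ((t:ℕ)+1 : ℤ) * qFact q t = _
    norm_num
  rw [hN]
  set X1 := ∏ s ∈ range t, qNum q ((j:ℤ) - s) with hX1
  set X2 := ∏ s ∈ range t, qNum q ((l:ℤ) - s) with hX2
  set X3 := ∏ s ∈ range t, qNum q ((M2 + (j:ℤ) + l) - s) with hX3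
  set Z := qNum q (M2 + (l:ℤ) + 2*j - t + 1) with hZ
  have h3' : X1 * X2 * X3 / qFact q t * qNum q ((l:ℤ) - t) * Z
      = (qNum q ((t:ℤ)+1) * (X1 * X2 * X3 * qNum q ((l:ℤ) - t) * Z))
        / (qNum q ((t:ℤ)+1) * qFact q t) := by
    rw [mul_div_mul_left _ _ hqt1, div_mul_eq_mul_div, div_mul_eq_mul_div]
  rw [h3', ← add_div]
  congr 1
  linear_combination (X1 * X2 * qNum q ((l:ℤ) - t) * X3) * key
end rec
section more
variable {q : ℂ}

lemma cRec_eq (hgen : Generic q) (l : ℕ) (M2 : ℤ) :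
    ∀ j t, cRec q l M2 j t = ccP q l M2 j t := by
  intro j
  induction j with
  | zero =>
    intro t
    match t with
    | 0 => simp [cRec, ccP, qFact]
    | t+1 =>
      show (0:ℂ) = _
      rw [eq_comm]
      unfold ccP
      rw [Finset.prod_eq_zero (Finset.mem_range.mpr (Nat.succ_pos t))]
      · simp
      · show qNum q (((0:ℕ):ℤ) - ((0:ℕ):ℤ)) = 0
        norm_num [qNum]
  | succ j ih =>
    intro t
    match t with
    | 0 =>
      show cRec q l M2 j 0 = _
      rw [ih 0]
      unfold ccP
      simp [qFact]
    | t+1 =>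
      show cRec q l M2 j (t+1) + cRec q l M2 j t * _ * _ = _
      rw [ih (t+1), ih t, ← ccP_rec hgen l M2 j t]

lemma prod_desc (hgen : Generic q) (K : ℕ) :
    ∀ t, t ≤ K → ∏ s ∈ Finset.range t, qNum q ((K:ℤ) - s) = qFact q K / qFact q (K - t) := by
  intro t
  induction t with
  | zero => simp [div_self (qFact_ne hgen K)]
  | succ t ih =>
    intro h
    have ht : t ≤ K := by omega
    rw [Finset.prod_range_succ, ih ht]
    have e : K - t = (K - (t+1)) + 1 := by omega
    have e2 : qFact q (K - t) = qNum q ((K:ℤ) - t) * qFact q (K - (t+1)) := by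
      rw [e]
      show qNum q (((K - (t+1) + 1 : ℕ)):ℤ) * _ = _
      have : (((K - (t+1) + 1 : ℕ)):ℤ) = (K:ℤ) - t := by omega
      rw [this]
    rw [e2]
    have h1 : qNum q ((K:ℤ) - t) ≠ 0 := qNum_ne hgen _ (by omega)
    have h2 : qFact q (K - (t+1)) ≠ 0 := qFact_ne hgen _
    field_simp
end more


/-! ### vector level relations -/

lemma comm_pow {n : ℕ} {c : ℂ} {A B : Matrix (Spins n) (Spins n) ℂ}
    (h : A * B = c • (B * A)) (a : ℕ) :
    A * B ^ a = c ^ a • (B ^ a * A) := by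
  induction a with
  | zero => simp
  | succ a ih =>
    rw [pow_succ, ← mul_assoc, ih, Matrix.smul_mul, mul_assoc, h, Matrix.mul_smul, smul_smul,
        ← mul_assoc, ← pow_succ, ← pow_succ]

lemma SzOp_diag (n : ℕ) :
    SzOp n = Matrix.diagonal (fun x : Spins n => ∑ k, (if x k = 0 then (1:ℂ) else -1)) := by
  ext x y
  by_cases h : x = y
  · subst h; simp [SzOp, Matrix.diagonal_apply_eq]
  · simp [SzOp, h, Matrix.diagonal_apply_ne _ h]

def intW (n : ℕ) (x : Spins n) : ℤ := ∑ k, (if x k = 0 then 1 else -1)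

lemma prod_zpow₀ {w : ℂ} (hw : w ≠ 0) {ι : Type*} (s : Finset ι) (f : ι → ℤ) :
    ∏ i ∈ s, w ^ f i = w ^ (∑ i ∈ s, f i) := by
  classical
  induction s using Finset.induction with
  | empty => simp
  | insert a s h ih => rw [Finset.prod_insert h, Finset.sum_insert h, zpow_add₀ hw, ih]

lemma Dm_mulVec {n : ℕ} {M2 : ℤ} {u : Spins n → ℂ}
    (hu : (SzOp n).mulVec u = (M2 : ℂ) • u) {c : ℂ} (hc : c ≠ 0) :
    (Dm n c).mulVec u = (c ^ M2) • u := by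
  have hx : ∀ x : Spins n, ((intW n x : ℂ)) * u x = (M2:ℂ) * u x := by
    intro x
    have h := congrFun hu x
    rw [SzOp_diag] at h
    rw [Matrix.mulVec_diagonal] at h
    have hc2 : ((intW n x : ℂ)) = ∑ k, (if x k = 0 then (1:ℂ) else -1) := by
      unfold intW
      push_cast
      refine Finset.sum_congr rfl fun k _ => ?_
      by_cases hk : x k = 0 <;> simp [hk]
    rw [hc2]
    simpa using h
  funext x
  show (Matrix.diagonal _).mulVec u x = _
  rw [Matrix.mulVec_diagonal]
  have hprod : ∏ k, qe c (x k) = c ^ (intW n x) := by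
    rw [intW, ← prod_zpow₀ hc]
    refine Finset.prod_congr rfl fun k _ => ?_
    by_cases h : x k = 0 <;> simp [qe, h]
  rw [hprod]
  by_cases hux : u x = 0
  · simp [hux]
  · have h1 : ((intW n x : ℂ)) = (M2 : ℂ) := mul_right_cancel₀ hux (hx x)
    have h2 : intW n x = M2 := by exact_mod_cast h1
    rw [h2]
    simp [Pi.smul_apply, smul_eq_mul]

/-- `w a b = F^a E^b u` -/
def wVec (n : ℕ) (v : ℂ) (u : Spins n → ℂ) (a b : ℕ) : Spins n → ℂ :=
  (SmOp n v ^ a * SpOp n v ^ b).mulVec u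

section vect
variable {n : ℕ} {v : ℂ} {M2 : ℤ} {u : Spins n → ℂ}

lemma zpow_helper {c : ℂ} (hc : c ≠ 0) (a b : ℕ) (M2 : ℤ) :
    ((c*c)⁻¹)^a * (c*c)^b * c^M2 = c^(M2 + 2*(b:ℤ) - 2*(a:ℤ)) := by
  have h1 : ((c*c)⁻¹ : ℂ)^a = c ^ (-(2*(a:ℤ))) := by
    rw [inv_pow, ← sq, ← pow_mul, ← zpow_natCast c (2*a), ← _root_.zpow_neg]
    congr 1 <;> omega
  have h2 : ((c*c) : ℂ)^b = c ^ ((2*(b:ℤ))) := by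
    rw [← sq, ← pow_mul, ← zpow_natCast c (2*b)]
    congr 1 <;> omega
  rw [h1, h2, ← zpow_add₀ hc, ← zpow_add₀ hc]
  congr 1
  ring

lemma Dm_wVec (hv : v ≠ 0) (hu : (SzOp n).mulVec u = (M2 : ℂ) • u) {c : ℂ} (hc : c ≠ 0)
    (a b : ℕ) :
    (Dm n c).mulVec (wVec n v u a b)
      = (c ^ (M2 + 2*(b:ℤ) - 2*(a:ℤ))) • wVec n v u a b := by
  have hE := Dm_mul_SpOp n v c hc
  have hF := Dm_mul_SmOp n v c hc
  have h1 : Dm n c * (SmOp n v ^ a * SpOp n v ^ b)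
      = (((c*c)⁻¹) ^ a * (c*c) ^ b) • ((SmOp n v ^ a * SpOp n v ^ b) * Dm n c) := by
    rw [← mul_assoc, comm_pow hF a, Matrix.smul_mul, mul_assoc, comm_pow hE b,
        Matrix.mul_smul, smul_smul, ← mul_assoc]
  unfold wVec
  rw [Matrix.mulVec_mulVec, h1, Matrix.smul_mulVec, ← Matrix.mulVec_mulVec,
      Dm_mulVec hu hc, Matrix.mulVec_smul, smul_smul, zpow_helper hc a b M2]

/-- action of `E` on `w (a+1) b` -/
lemma E_wVec (hv : v ≠ 0) (hgen : Generic (v^2)) (hu : (SzOp n).mulVec u = (M2 : ℂ) • u)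
    (a b : ℕ) :
    (SpOp n v).mulVec (wVec n v u (a+1) b)
      = wVec n v u (a+1) (b+1)
        + (qNum (v^2) ((a:ℤ)+1) * qNum (v^2) (M2 + 2*(b:ℤ) - (a:ℤ))) • wVec n v u a b := by
  set q := v^2 with hqdef
  have hq0 : q ≠ 0 := hgen.1
  have hsub : q - q⁻¹ ≠ 0 := qsub_ne hgen
  have hqi0 : q⁻¹ ≠ 0 := inv_ne_zero hq0
  -- E * F = F * E + (q - q⁻¹)⁻¹ • (Dq - Dq')
  have hEF : SpOp n v * SmOp n v
      = SmOp n v * SpOp n v + (q - q⁻¹)⁻¹ • (Dm n q - Dm n q⁻¹) := by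
    have := EF_comm n v hv
    rw [← this, smul_smul, inv_mul_cancel₀ hsub, one_smul]
    abel
  -- key: action of E∘F on an eigenvector-type vector w a' b
  have key : ∀ a' b' : ℕ,
      (SpOp n v).mulVec ((SmOp n v).mulVec (wVec n v u a' b'))
        = (SmOp n v).mulVec ((SpOp n v).mulVec (wVec n v u a' b'))
          + (qNum q (M2 + 2*(b':ℤ) - 2*(a':ℤ))) • wVec n v u a' b' := by
    intro a' b'
    rw [Matrix.mulVec_mulVec, Matrix.mulVec_mulVec, hEF, Matrix.add_mulVec,
        Matrix.smul_mulVec, Matrix.sub_mulVec]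
    congr 1
    rw [Dm_wVec hv hu hq0, Dm_wVec hv hu hqi0]
    rw [smul_sub, smul_smul, smul_smul, ← sub_smul]
    congr 1
    rw [_root_.inv_zpow, ← _root_.zpow_neg]
    unfold qNum
    rw [div_eq_mul_inv]
    ring
  have hFw : ∀ a' b' : ℕ, wVec n v u (a'+1) b' = (SmOp n v).mulVec (wVec n v u a' b') := by
    intro a' b'
    unfold wVec
    rw [Matrix.mulVec_mulVec, ← mul_assoc, ← pow_succ']
  have hEad : ∀ b' : ℕ, (SpOp n v).mulVec (wVec n v u 0 b') = wVec n v u 0 (b'+1) := by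
    intro b'
    unfold wVec
    rw [pow_zero, one_mul, one_mul, Matrix.mulVec_mulVec, ← pow_succ']
  have hone : qNum q 1 = 1 := by
    unfold qNum
    rw [zpow_one, _root_.zpow_neg_one, div_self hsub]
  induction a with
  | zero =>
    rw [hFw 0 b, key 0 b, hEad b, ← hFw 0 (b+1)]
    norm_num [hone]
  | succ a ih =>
    rw [hFw (a+1) b, key (a+1) b, ih, Matrix.mulVec_add, Matrix.mulVec_smul,
        ← hFw (a+1) (b+1), ← hFw a b]
    rw [add_assoc, ← add_smul]
    congr 2
    have hcore := qNum_core hgen ((a:ℤ)+2) (M2 + 2*(b:ℤ) - a - 1) ((a:ℤ)+1)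
    have e1 : ((a:ℤ)+2) - ((a:ℤ)+1) = 1 := by ring
    have e2 : (M2 + 2*(b:ℤ) - a - 1) - ((a:ℤ)+1) = M2 + 2*(b:ℤ) - 2*((a:ℤ)+1) := by ring
    have e3 : ((a:ℤ)+2) + (M2 + 2*(b:ℤ) - a - 1) - ((a:ℤ)+1) = M2 + 2*(b:ℤ) - a := by ring
    rw [e1, e2, e3, hone, one_mul] at hcore
    have e4 : ((a+1:ℕ):ℤ) + 1 = (a:ℤ)+2 := by push_cast; ring
    have e5 : M2 + 2*(b:ℤ) - ((a+1:ℕ):ℤ) = M2 + 2*(b:ℤ) - a - 1 := by push_cast; ring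
    have e6 : M2 + 2*(b:ℤ) - 2*((a+1:ℕ):ℤ) = M2 + 2*(b:ℤ) - 2*((a:ℤ)+1) := by push_cast; ring
    rw [e4, e5, e6, hcore]
    ring
end vect

lemma qBinom_nat {q : ℂ} (K T : ℕ) (h : T ≤ K) :
    qBinom q (K:ℤ) (T:ℤ) = qFact q K / (qFact q T * qFact q (K - T)) := by
  unfold qBinom
  rw [if_pos ⟨by omega, by exact_mod_cast h⟩]
  have e1 : ((K:ℤ)).toNat = K := Int.toNat_natCast K
  have e2 : (((K:ℤ)) - T).toNat = K - T := by omega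
  have e3 : ((T:ℤ)).toNat = T := Int.toNat_natCast T
  rw [e1, e2, e3]

lemma mulVec_sumF {n : ℕ} (A : Matrix (Spins n) (Spins n) ℂ) {ι : Type*} (s : Finset ι)
    (f : ι → Spins n → ℂ) : A.mulVec (∑ i ∈ s, f i) = ∑ i ∈ s, A.mulVec (f i) := by
  simp only [← Matrix.mulVecLin_apply]
  exact map_sum (Matrix.mulVecLin A) f s

lemma cRec_vanish (q : ℂ) (l : ℕ) (M2 : ℤ) :
    ∀ j t, j < t → cRec q l M2 j t = 0 := by
  intro j
  induction j with
  | zero =>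
    intro t ht
    match t with
    | t+1 => rfl
  | succ j ih =>
    intro t ht
    match t with
    | t+1 =>
      show cRec q l M2 j (t+1) + cRec q l M2 j t * _ * _ = 0
      rw [ih (t+1) (by omega), ih t (by omega)]
      ring

lemma mainInd {n : ℕ} {v : ℂ} {M2 : ℤ} {u : Spins n → ℂ} (hv : v ≠ 0) (hgen : Generic (v^2))
    (hu : (SzOp n).mulVec u = (M2:ℂ) • u) (k l : ℕ) (hkl : k ≤ l) :
    ∀ j, j ≤ k → (SpOp n v ^ j).mulVec (wVec n v u l l)
      = ∑ t ∈ Finset.range (k+1), cRec (v^2) l M2 j t • wVec n v u (l-t) (l+j-t) := by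
  intro j hj
  induction j with
  | zero =>
    rw [pow_zero, Matrix.one_mulVec, Finset.sum_eq_single 0]
    · show _ = cRec (v^2) l M2 0 0 • wVec n v u (l-0) (l+0-0)
      have h1 : l - 0 = l := rfl
      have h2 : l + 0 - 0 = l := rfl
      rw [h1, h2]
      show wVec n v u l l = (1:ℂ) • wVec n v u l l
      rw [one_smul]
    · intro t _ ht
      have : 0 < t := Nat.pos_of_ne_zero ht
      rw [cRec_vanish (v^2) l M2 0 t this, zero_smul]
    · intro h; exact absurd (Finset.mem_range.mpr (by omega)) h
  | succ j ih =>
    have hj' : j ≤ k := by omega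
    have hstep := ih hj'
    rw [pow_succ', ← Matrix.mulVec_mulVec, hstep, mulVec_sumF]
    set q := v^2 with hq
    have expand : ∀ t ∈ Finset.range (k+1),
        (SpOp n v).mulVec (cRec q l M2 j t • wVec n v u (l-t) (l+j-t))
          = cRec q l M2 j t • wVec n v u (l-t) (l+(j+1)-t)
            + (cRec q l M2 j t * (qNum q ((l:ℤ)-t) * qNum q (M2 + (l:ℤ) + 2*j - t + 1)))
                • wVec n v u (l-(t+1)) (l+j-t) := by
      intro t hht
      by_cases htj : t ≤ j
      · have htl : t < l := by omega
        have hE := E_wVec hv hgen hu (l - t - 1) (l + j - t)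
        have i1 : l - t - 1 + 1 = l - t := by omega
        have i2 : l + j - t + 1 = l + (j+1) - t := by omega
        have i3 : l - t - 1 = l - (t+1) := by omega
        have c1 : ((l - t - 1 : ℕ):ℤ) + 1 = (l:ℤ) - t := by omega
        have c2 : M2 + 2*((l + j - t : ℕ):ℤ) - ((l - t - 1:ℕ):ℤ)
            = M2 + (l:ℤ) + 2*j - t + 1 := by omega
        rw [i1, i2, c1, c2] at hE
        rw [i3] at hE
        rw [Matrix.mulVec_smul, hE, smul_add, smul_smul]
      · have h0 : cRec q l M2 j t = 0 := cRec_vanish q l M2 j t (by omega)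
        rw [h0, zero_smul, Matrix.mulVec_zero, zero_smul, zero_mul, zero_smul, add_zero]
    rw [Finset.sum_congr rfl expand, Finset.sum_add_distrib]
    -- reshape target
    have hW : ∀ t, l + (j+1) - (t+1) = l + j - t := fun t => by omega
    rw [Finset.sum_range_succ' (fun t => cRec q l M2 (j+1) t • wVec n v u (l-t) (l+(j+1)-t)) k]
    rw [Finset.sum_range_succ' (fun t => cRec q l M2 j t • wVec n v u (l-t) (l+(j+1)-t)) k]
    rw [Finset.sum_range_succ (fun t =>
      (cRec q l M2 j t * (qNum q ((l:ℤ)-t) * qNum q (M2 + (l:ℤ) + 2*j - t + 1)))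
        • wVec n v u (l-(t+1)) (l+j-t)) k]
    rw [cRec_vanish q l M2 j k (by omega), zero_mul, zero_smul, add_zero]
    rw [add_right_comm]
    have hB : cRec q l M2 (j+1) 0 = cRec q l M2 j 0 := rfl
    rw [hB]
    congr 1
    rw [← Finset.sum_add_distrib]
    refine Finset.sum_congr rfl fun t _ => ?_
    rw [hW t, ← add_smul]
    rw [show cRec q l M2 (j+1) (t+1) = cRec q l M2 j (t+1)
        + cRec q l M2 j t * qNum q ((l:ℤ)-t) * qNum q (M2+(l:ℤ)+2*j-t+1) from rfl, mul_assoc]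

lemma final_scalar (A B C D E F' G H : ℂ) (hA : A ≠ 0) (hB : B ≠ 0) (hC : C ≠ 0)
    (hD : D ≠ 0) (hE : E ≠ 0) (hF : F' ≠ 0) (hG : G ≠ 0) (hH : H ≠ 0) :
    (A^2)⁻¹ * (B^2)⁻¹ * (A/C * (B/D) * (F'/G) / E)
      = H/(A*D) * (H/(B*C)) * (F'/(E*G)) * (H^2)⁻¹ := by
  have lhs_eq : (A^2)⁻¹ * (B^2)⁻¹ * (A/C * (B/D) * (F'/G) / E)
      = (A*B*F')/(A^2*B^2*C*D*E*G) := by ring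
  have rhs_eq : H/(A*D) * (H/(B*C)) * (F'/(E*G)) * (H^2)⁻¹
      = (H*H*F')/(A*B*C*D*E*G*H^2) := by ring
  rw [lhs_eq, rhs_eq, div_eq_div_iff
      (by simp [pow_eq_zero_iff, hA, hB, hC, hD, hE, hG])
      (by simp [pow_eq_zero_iff, hA, hB, hC, hD, hE, hG, hH])]
  ring


set_option maxHeartbeats 1000000 in
/-- for `q = v²` generic, `0 ≤ k ≤ l`, `m ≥ 0` a half-integer (`M2 = 2m`)
and `u` in the weight space `W_m` (eigenvector of `Σ^z` with eigenvalue `2m`),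
`S_k S_l u = Σ_{i=0}^{k} [l+i choose k][l+i choose l][2m+k+l choose k−i] S_{l+i} u`. -/
theorem stmt5 (n : ℕ) (hn : 1 ≤ n) (v : ℂ) (hv : v ≠ 0) (hgen : Generic (v ^ 2))
    (k l : ℕ) (hkl : k ≤ l) (M2 : ℤ) (hM : 0 ≤ M2)
    (u : Spins n → ℂ) (hu : (SzOp n).mulVec u = (M2 : ℂ) • u) :
    (SOp n v k).mulVec ((SOp n v l).mulVec u) =
      ∑ i ∈ Finset.range (k + 1),
        (qBinom (v ^ 2) ((l : ℤ) + i) k * qBinom (v ^ 2) ((l : ℤ) + i) l *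
            qBinom (v ^ 2) (M2 + k + l) ((k : ℤ) - i)) •
          (SOp n v (l + i)).mulVec u := by
  have hq0 : (v^2 : ℂ) ≠ 0 := hgen.1
  set m : ℕ := M2.toNat with hmdef
  have hm : (m : ℤ) = M2 := Int.toNat_of_nonneg hM
  -- left side to wVec sums
  have hL1 : (SOp n v l).mulVec u = ((qFact (v^2) l ^ 2)⁻¹) • wVec n v u l l := by
    unfold SOp wVec
    rw [Matrix.smul_mulVec]
  have hL2 : (SOp n v k).mulVec ((SOp n v l).mulVec u)
      = ((qFact (v^2) k ^2)⁻¹ * (qFact (v^2) l ^2)⁻¹) •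
        (SmOp n v ^ k).mulVec ((SpOp n v ^ k).mulVec (wVec n v u l l)) := by
    rw [hL1]
    unfold SOp
    rw [Matrix.mulVec_smul, Matrix.smul_mulVec, smul_smul, Matrix.mulVec_mulVec,
        mul_comm ((qFact (v ^ 2) l ^ 2)⁻¹) ((qFact (v ^ 2) k ^ 2)⁻¹)]
  rw [hL2, mainInd hv hgen hu k l hkl k le_rfl, mulVec_sumF, Finset.smul_sum]
  have hterm : ∀ t ∈ Finset.range (k+1),
      ((qFact (v^2) k ^2)⁻¹ * (qFact (v^2) l ^2)⁻¹) •
        (SmOp n v ^ k).mulVec (cRec (v^2) l M2 k t • wVec n v u (l-t) (l+k-t))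
      = (((qFact (v^2) k ^2)⁻¹ * (qFact (v^2) l ^2)⁻¹) * cRec (v^2) l M2 k t)
          • wVec n v u (l+(k-t)) (l+(k-t)) := by
    intro t ht
    have ht' : t ≤ k := by
      have := Finset.mem_range.mp ht; omega
    rw [Matrix.mulVec_smul, smul_smul]
    congr 1
    unfold wVec
    rw [Matrix.mulVec_mulVec, ← mul_assoc, ← pow_add,
        show k + (l-t) = l + (k-t) from by omega, show l+k-t = l+(k-t) from by omega]
  rw [Finset.sum_congr rfl hterm,
      ← Finset.sum_range_reflect (fun t => (((qFact (v^2) k ^2)⁻¹ * (qFact (v^2) l ^2)⁻¹)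
        * cRec (v^2) l M2 k t) • wVec n v u (l+(k-t)) (l+(k-t))) (k+1)]
  refine Finset.sum_congr rfl fun i hi => ?_
  have hik : i ≤ k := by
    have := Finset.mem_range.mp hi; omega
  have e0 : k + 1 - 1 - i = k - i := by omega
  rw [e0]
  have e1 : k - (k - i) = i := Nat.sub_sub_self hik
  rw [e1]
  -- right side term
  have hR : (SOp n v (l+i)).mulVec u
      = ((qFact (v^2) (l+i) ^2)⁻¹) • wVec n v u (l+i) (l+i) := by
    unfold SOp wVec
    rw [Matrix.smul_mulVec]
  rw [hR, smul_smul]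
  congr 1
  -- the scalar identity
  rw [cRec_eq hgen l M2 k (k-i)]
  unfold ccP
  have hc3 : ∀ s : ℕ, (M2 + (k:ℤ) + l) - (s:ℤ) = (((m+k+l:ℕ)):ℤ) - (s:ℤ) := by
    intro s; push_cast [hm]; ring
  simp only [hc3]
  rw [prod_desc hgen k (k-i) (by omega), prod_desc hgen l (k-i) (by omega),
      prod_desc hgen (m+k+l) (k-i) (by omega)]
  have hb1 : qBinom (v^2) ((l:ℤ)+i) (k:ℤ)
      = qFact (v^2) (l+i) / (qFact (v^2) k * qFact (v^2) (l+i-k)) := by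
    rw [show (l:ℤ)+i = ((l+i:ℕ):ℤ) by push_cast; ring]
    exact qBinom_nat (l+i) k (by omega)
  have hb2 : qBinom (v^2) ((l:ℤ)+i) (l:ℤ)
      = qFact (v^2) (l+i) / (qFact (v^2) l * qFact (v^2) i) := by
    rw [show (l:ℤ)+i = ((l+i:ℕ):ℤ) by push_cast; ring]
    rw [qBinom_nat (l+i) l (by omega), show l+i-l = i from by omega]
  have hb3 : qBinom (v^2) (M2 + (k:ℤ) + l) ((k:ℤ)-i)
      = qFact (v^2) (m+k+l) / (qFact (v^2) (k-i) * qFact (v^2) (m+k+l-(k-i))) := by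
    rw [show M2 + (k:ℤ) + l = ((m+k+l:ℕ):ℤ) by push_cast [hm]; ring,
        show (k:ℤ)-i = ((k-i:ℕ):ℤ) by omega]
    exact qBinom_nat (m+k+l) (k-i) (by omega)
  rw [hb1, hb2, hb3]
  rw [show k - (k-i) = i from by omega, show l - (k-i) = l+i-k from by omega]
  have F1 := qFact_ne hgen k
  have F2 := qFact_ne hgen l
  have F3 := qFact_ne hgen i
  have F4 := qFact_ne hgen (l+i-k)
  have F5 := qFact_ne hgen (k-i)
  have F6 := qFact_ne hgen (m+k+l)
  have F7 := qFact_ne hgen (m+k+l-(k-i))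
  have F8 := qFact_ne hgen (l+i)
  exact final_scalar _ _ _ _ _ _ _ _ F1 F2 F3 F4 F5 F6 F7 F8


end
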